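/- Let R be a finite local reflexive ring with Jacobson radical J = J(R) and residue field F = R/J a prime field (isomorphic to ZMod p for some prime p). Suppose the dimension of J²/J³ as an F-vector space is at most 2 and J⁴ = 0. Then R is semicommutative. -/

import Mathlib

open Pointwise

/-- A ring is reflexive if `aRb = 0` implies `bRa = 0`. -/
def IsReflexiveRing (R : Type*) [Ring R] : Prop :=
  ∀ a b : R, (∀ r : R, a * r * b = 0) → (∀ r : R, b * r * a = 0)

/-- A ring is semicommutative if `a*b = 0` implies `aRb = 0`. -/
def IsSemicommutativeRing (R : Type*) [Ring R] : Prop :=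
  ∀ a b : R, a * b = 0 → ∀ r : R, a * r * b = 0

/-- The `i`-th power of the Jacobson radical, as an additive subgroup: the additive
closure of the set of products of `i` elements of the Jacobson radical. -/
def jacobsonPow (R : Type*) [Ring R] (i : ℕ) : AddSubgroup R :=
  AddSubgroup.closure (((Ideal.jacobson (⊥ : Ideal R) : Ideal R) : Set R) ^ i)

/-- For a finite local ring with residue field of prime order `p`, the dimension of
`Jⁱ/J^(i+1)` over the residue field is `d` iff the index of `J^(i+1)` in `Jⁱ` is `p ^ d`. -/
def jacobsonFactorDim (R : Type*) [Ring R] (p i d : ℕ) : Prop :=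
  (jacobsonPow R (i + 1)).relIndex (jacobsonPow R i) = p ^ d

section Aux

variable {R : Type*} [Ring R]

/-- The Jacobson radical, as a set. -/
def Jset (R : Type*) [Ring R] : Set R := ((Ideal.jacobson (⊥ : Ideal R) : Ideal R) : Set R)

lemma jpow_mul_mem_left {x z : R} (hx : x ∈ Jset R) {n : ℕ}
    (hz : z ∈ jacobsonPow R n) : x * z ∈ jacobsonPow R (n + 1) := by
  induction hz using AddSubgroup.closure_induction with
  | mem y hy =>
      exact AddSubgroup.subset_closure (by rw [pow_succ']; exact Set.mul_mem_mul hx hy)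
  | zero => simpa using (jacobsonPow R (n+1)).zero_mem
  | add y z _ _ h1 h2 => rw [mul_add]; exact (jacobsonPow R (n+1)).add_mem h1 h2
  | neg y _ h1 => rw [mul_neg]; exact (jacobsonPow R (n+1)).neg_mem h1

lemma jpow_mul_mem_right {x z : R} (hx : x ∈ Jset R) {n : ℕ}
    (hz : z ∈ jacobsonPow R n) : z * x ∈ jacobsonPow R (n + 1) := by
  induction hz using AddSubgroup.closure_induction with
  | mem y hy =>
      exact AddSubgroup.subset_closure (by rw [pow_succ]; exact Set.mul_mem_mul hy hx)
  | zero => simpa using (jacobsonPow R (n+1)).zero_mem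
  | add y z _ _ h1 h2 => rw [add_mul]; exact (jacobsonPow R (n+1)).add_mem h1 h2
  | neg y _ h1 => rw [neg_mul]; exact (jacobsonPow R (n+1)).neg_mem h1

lemma mem_jpow2 {u v : R} (hu : u ∈ Jset R) (hv : v ∈ Jset R) :
    u * v ∈ jacobsonPow R 2 :=
  AddSubgroup.subset_closure (by rw [pow_two]; exact Set.mul_mem_mul hu hv)

lemma quad_eq_zero (hJ4 : jacobsonPow R 4 = ⊥) {w x y z : R}
    (hw : w ∈ Jset R) (hx : x ∈ Jset R) (hy : y ∈ Jset R) (hz : z ∈ Jset R) :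
    w * x * y * z = 0 := by
  have hm : w * x * y * z ∈ jacobsonPow R 4 :=
    AddSubgroup.subset_closure (by
      rw [pow_succ, pow_succ, pow_two]
      exact Set.mul_mem_mul (Set.mul_mem_mul (Set.mul_mem_mul hw hx) hy) hz)
  rw [hJ4] at hm
  exact AddSubgroup.mem_bot.mp hm

lemma j3_mul_right (hJ4 : jacobsonPow R 4 = ⊥) {z x : R}
    (hz : z ∈ jacobsonPow R 3) (hx : x ∈ Jset R) : z * x = 0 := by
  have hm := jpow_mul_mem_right hx hz
  rw [show (3:ℕ)+1 = 4 from rfl, hJ4] at hm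
  exact AddSubgroup.mem_bot.mp hm

lemma j3_mul_left (hJ4 : jacobsonPow R 4 = ⊥) {z x : R}
    (hz : z ∈ jacobsonPow R 3) (hx : x ∈ Jset R) : x * z = 0 := by
  have hm := jpow_mul_mem_left hx hz
  rw [show (3:ℕ)+1 = 4 from rfl, hJ4] at hm
  exact AddSubgroup.mem_bot.mp hm

lemma decomp_aux (p : ℕ) (hp : p.Prime) (f : R →+* ZMod p)
    (hker : RingHom.ker f = Ideal.jacobson (⊥ : Ideal R)) (r : R) :
    ∃ (n : ℕ) (j : R), j ∈ Jset R ∧ r = (n : R) + j := by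
  haveI : NeZero p := ⟨hp.ne_zero⟩
  refine ⟨(f r).val, r - ((f r).val : R), ?_, by abel⟩
  have h0 : f (r - ((f r).val : R)) = 0 := by
    rw [map_sub, map_natCast, ZMod.natCast_rightInverse (f r), sub_self]
  have : r - ((f r).val : R) ∈ RingHom.ker f := RingHom.mem_ker.mpr h0
  rw [hker] at this
  exact this

lemma p_mem_Jset (p : ℕ) (f : R →+* ZMod p)
    (hker : RingHom.ker f = Ideal.jacobson (⊥ : Ideal R)) : (p : R) ∈ Jset R := by
  have : (p : R) ∈ RingHom.ker f := RingHom.mem_ker.mpr (by rw [map_natCast, ZMod.natCast_self])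
  rw [hker] at this; exact this

lemma refl_pair (href : ∀ a b : R, (∀ r : R, a * r * b = 0) → (∀ r : R, b * r * a = 0))
    (hdec : ∀ r : R, ∃ (n : ℕ) (j : R), j ∈ Jset R ∧ r = (n : R) + j)
    {u v : R} (h0 : u * v = 0) (hj : ∀ j ∈ Jset R, u * j * v = 0) : v * u = 0 := by
  have hall : ∀ r : R, u * r * v = 0 := by
    intro r
    obtain ⟨n, j, hjS, rfl⟩ := hdec r
    rw [mul_add, add_mul, hj j hjS, add_zero,
      show u * (n : R) = (n : R) * u from (Nat.cast_commute n u).symm, mul_assoc, h0, mul_zero]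
  simpa using href u v hall 1

lemma unit_of_f_ne (p : ℕ) (hp : p.Prime) (f : R →+* ZMod p)
    (hker : RingHom.ker f = Ideal.jacobson (⊥ : Ideal R))
    (hJ4 : jacobsonPow R 4 = ⊥) {x : R} (hx : f x ≠ 0) :
    ∃ y : R, y * x = 1 ∧ x * y = 1 := by
  haveI : NeZero p := ⟨hp.ne_zero⟩
  set n : ℕ := (f x).val with hn
  have hj : x - (n : R) ∈ Jset R := by
    have h0 : f (x - (n : R)) = 0 := by
      rw [map_sub, map_natCast, hn, ZMod.natCast_rightInverse (f x), sub_self]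
    have := RingHom.mem_ker.mpr h0
    rw [hker] at this; exact this
  set j : R := x - (n : R) with hjdef
  have hpn : ¬ p ∣ n := by
    intro hdvd
    apply hx
    have : ((n : ℕ) : ZMod p) = 0 := (ZMod.natCast_eq_zero_iff n p).mpr hdvd
    rw [← this, hn, ZMod.natCast_rightInverse (f x)]
  have hcop : Nat.Coprime n (p ^ 4) := ((hp.coprime_iff_not_dvd.mpr hpn).symm).pow_right 4
  have hic : IsCoprime (n : ℤ) ((p : ℤ) ^ 4) := by
    rw [Int.isCoprime_iff_gcd_eq_one, ← Nat.cast_pow, Int.gcd_natCast_natCast]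
    exact hcop
  obtain ⟨u, v, huv⟩ := hic
  have hp4 : ((p : R)) ^ 4 = 0 := by
    have hpJ : (p : R) ∈ Jset R := p_mem_Jset p f hker
    have := quad_eq_zero hJ4 hpJ hpJ hpJ hpJ
    rw [show ((p:R))^4 = (p:R)*(p:R)*(p:R)*(p:R) by rw [pow_succ, pow_succ, pow_two]]
    exact this
  set m : R := (u : R) with hm
  have hmn : m * (n : R) = 1 := by
    have h := congrArg (fun t : ℤ => (t : R)) huv
    push_cast at h
    rw [hp4, mul_zero, add_zero] at h
    exact h
  have hnm : (n : R) * m = 1 := by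
    rw [hm, ← (Int.cast_commute u ((n:ℕ):R)).eq]
    exact hmn
  have hw : m * j ∈ Jset R := Ideal.mul_mem_left _ m hj
  set w : R := m * j with hwdef
  have hx' : x = (n : R) * (1 + w) := by
    rw [mul_add, mul_one, hwdef, ← mul_assoc, hnm, one_mul, hjdef]
    abel
  have hw4 : w * w * w * w = 0 := quad_eq_zero hJ4 hw hw hw hw
  set e : R := 1 - w + w * w - w * w * w with he
  have h1 : e * (1 + w) = 1 := by
    have : e * (1 + w) = 1 - w * w * w * w := by rw [he]; noncomm_ring
    rw [this, hw4, sub_zero]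
  have h2 : (1 + w) * e = 1 := by
    have : (1 + w) * e = 1 - w * w * w * w := by rw [he]; noncomm_ring
    rw [this, hw4, sub_zero]
  refine ⟨e * m, ?_, ?_⟩
  · rw [hx', mul_assoc, ← mul_assoc m, hmn, one_mul, h1]
  · rw [hx', mul_assoc, ← mul_assoc (1+w) e m, h2, one_mul, hnm]

lemma psm {p : ℕ} (hp : p.Prime) {x : R} (hx : x ≠ 0) (hpx : p • x = 0)
    {n : ℕ} (hnx : n • x = 0) : p ∣ n := by
  have h1 : addOrderOf x ∣ p := addOrderOf_dvd_of_nsmul_eq_zero hpx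
  have h2 : addOrderOf x ∣ n := addOrderOf_dvd_of_nsmul_eq_zero hnx
  rcases (Nat.Prime.eq_one_or_self_of_dvd hp _ h1) with h | h
  · exact absurd (AddMonoid.addOrderOf_eq_one_iff.mp h) hx
  · rwa [h] at h2

lemma span_lemma {p d : ℕ} [Finite R] (hp : p.Prime)
    (hrel : (jacobsonPow R 3).relIndex (jacobsonPow R 2) = p ^ d) (hd : d ≤ 2)
    (hpK : ∀ x ∈ jacobsonPow R 2, p • x ∈ jacobsonPow R 3)
    {τ α : R} (hτ : τ ∈ jacobsonPow R 2) (hα : α ∈ jacobsonPow R 2)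
    (hind : ∀ m n : ℕ, m • τ + n • α ∈ jacobsonPow R 3 → p ∣ m ∧ p ∣ n) :
    ∀ x ∈ jacobsonPow R 2, ∃ m n : ℕ, x - m • τ - n • α ∈ jacobsonPow R 3 := by
  haveI : NeZero p := ⟨hp.ne_zero⟩
  set K := jacobsonPow R 2 with hK
  set H := (jacobsonPow R 3).addSubgroupOf K with hH
  let Q := K ⧸ H
  have htor : ∀ x : Q, p • x = 0 := by
    intro x
    induction x using QuotientAddGroup.induction_on with
    | H y =>
      show p • ((QuotientAddGroup.mk' H) y) = 0
      rw [← map_nsmul (QuotientAddGroup.mk' H) p y]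
      rw [QuotientAddGroup.mk'_apply, QuotientAddGroup.eq_zero_iff]
      exact AddSubgroup.mem_addSubgroupOf.mpr (by
        simpa using hpK (y : R) y.2)
  haveI : Module (ZMod p) Q := AddCommGroup.zmodModule htor
  let τ' : K := ⟨τ, hτ⟩
  let α' : K := ⟨α, hα⟩
  let mk : K →+ Q := QuotientAddGroup.mk' H
  have key : ∀ i j : ZMod p, i • mk τ' + j • mk α' = 0 → i = 0 ∧ j = 0 := by
    intro i j hij
    have hi : i • mk τ' = i.val • mk τ' := by
      rw [← Nat.cast_smul_eq_nsmul (ZMod p) i.val, ZMod.natCast_rightInverse i]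
    have hjj : j • mk α' = j.val • mk α' := by
      rw [← Nat.cast_smul_eq_nsmul (ZMod p) j.val, ZMod.natCast_rightInverse j]
    rw [hi, hjj, ← map_nsmul, ← map_nsmul, ← map_add] at hij
    have hmem : (i.val • τ' + j.val • α' : K) ∈ H := by
      rwa [QuotientAddGroup.mk'_apply, QuotientAddGroup.eq_zero_iff] at hij
    have hmem' : i.val • τ + j.val • α ∈ jacobsonPow R 3 := by
      have := AddSubgroup.mem_addSubgroupOf.mp hmem
      simpa using this
    obtain ⟨hdi, hdj⟩ := hind _ _ hmem'
    constructor
    · rw [← ZMod.natCast_rightInverse i]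
      exact (ZMod.natCast_eq_zero_iff _ _).mpr hdi
    · rw [← ZMod.natCast_rightInverse j]
      exact (ZMod.natCast_eq_zero_iff _ _).mpr hdj
  let g : ZMod p × ZMod p → Q := fun z => z.1 • mk τ' + z.2 • mk α'
  have hginj : Function.Injective g := by
    intro z₁ z₂ h
    have hz : (z₁.1 - z₂.1) • mk τ' + (z₁.2 - z₂.2) • mk α' = 0 := by
      have : g z₁ - g z₂ = 0 := by rw [h, sub_self]
      rw [← this]
      simp only [g, sub_smul]
      abel
    obtain ⟨h1, h2⟩ := key _ _ hz
    have e1 : z₁.1 = z₂.1 := by rwa [sub_eq_zero] at h1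
    have e2 : z₁.2 = z₂.2 := by rwa [sub_eq_zero] at h2
    exact Prod.ext e1 e2
  have hcardQ : Nat.card Q = p ^ d := hrel
  have hcard2 : Nat.card (ZMod p × ZMod p) = p ^ 2 := by
    rw [Nat.card_prod, Nat.card_zmod, pow_two]
  have hle : Nat.card (ZMod p × ZMod p) ≤ Nat.card Q :=
    Nat.card_le_card_of_injective g hginj
  have hdle : p ^ d ≤ p ^ 2 := Nat.pow_le_pow_right hp.one_lt.le hd
  have hcards : Nat.card (ZMod p × ZMod p) = Nat.card Q := by omega
  have hbij : Function.Bijective g :=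
    (Nat.bijective_iff_injective_and_card g).mpr ⟨hginj, hcards⟩
  intro x hx
  obtain ⟨⟨i, j⟩, hgij⟩ := hbij.2 (mk ⟨x, hx⟩)
  refine ⟨i.val, j.val, ?_⟩
  have hi : i • mk τ' = i.val • mk τ' := by
    rw [← Nat.cast_smul_eq_nsmul (ZMod p) i.val, ZMod.natCast_rightInverse i]
  have hjj : j • mk α' = j.val • mk α' := by
    rw [← Nat.cast_smul_eq_nsmul (ZMod p) j.val, ZMod.natCast_rightInverse j]
  have hmk : mk (⟨x, hx⟩ - (i.val • τ' + j.val • α') : K) = 0 := by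
    rw [map_sub, ← hgij]
    simp only [g, hi, hjj, ← map_nsmul, ← map_add]
    rw [sub_self]
  have hmem : (⟨x, hx⟩ - (i.val • τ' + j.val • α') : K) ∈ H := by
    rwa [QuotientAddGroup.mk'_apply, QuotientAddGroup.eq_zero_iff] at hmk
  have hmem2 := AddSubgroup.mem_addSubgroupOf.mp hmem
  have hco : ((⟨x, hx⟩ - (i.val • τ' + j.val • α') : K) : R)
      = x - i.val • τ - j.val • α := by
    push_cast
    abel
  rwa [hco] at hmem2

end Aux

theorem finite_local_reflexive_dim2_le_two_j4_zero_semicommutative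
    (R : Type*) [Ring R] [Finite R] [IsLocalRing R] (href : IsReflexiveRing R)
    (p : ℕ) (hp : p.Prime) (f : R →+* ZMod p) (hf : Function.Surjective f)
    (hker : RingHom.ker f = Ideal.jacobson (⊥ : Ideal R))
    (h2 : ∃ d ≤ 2, jacobsonFactorDim R p 2 d) (hJ4 : jacobsonPow R 4 = ⊥) :
    IsSemicommutativeRing R := by
  intro a b hab r
  have hdec : ∀ r : R, ∃ (n : ℕ) (j : R), j ∈ Jset R ∧ r = (n : R) + j :=
    decomp_aux p hp f hker
  by_cases hfa : f a = 0
  swap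
  · -- a is a unit, so b = 0
    obtain ⟨y, hy1, _⟩ := unit_of_f_ne p hp f hker hJ4 hfa
    have hb : b = 0 := by
      have : y * (a * b) = 0 := by rw [hab, mul_zero]
      rwa [← mul_assoc, hy1, one_mul] at this
    rw [hb, mul_zero]
  by_cases hfb : f b = 0
  swap
  · -- b is a unit, so a = 0
    obtain ⟨y, _, hy2⟩ := unit_of_f_ne p hp f hker hJ4 hfb
    have ha : a = 0 := by
      have : (a * b) * y = 0 := by rw [hab, zero_mul]
      rwa [mul_assoc, hy2, mul_one] at this
    rw [ha, zero_mul, zero_mul]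
  -- now a, b ∈ J
  have ha : a ∈ Jset R := by
    have := RingHom.mem_ker.mpr hfa; rwa [hker] at this
  have hb : b ∈ Jset R := by
    have := RingHom.mem_ker.mpr hfb; rwa [hker] at this
  have hpJ : (p : R) ∈ Jset R := p_mem_Jset p f hker
  obtain ⟨n, c, hc, rfl⟩ := hdec r
  rw [mul_add, add_mul, show a * (n : R) = (n : R) * a from (Nat.cast_commute n a).symm,
    mul_assoc, hab, mul_zero, zero_add]
  -- goal : a * c * b = 0
  by_contra hs
  -- Z1 : b J a = 0
  have Z1 : ∀ x ∈ Jset R, b * x * a = 0 := by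
    intro x hx
    have h0 : (x * a) * b = 0 := by rw [mul_assoc, hab, mul_zero]
    have hjz : ∀ j' ∈ Jset R, (x * a) * j' * b = 0 := fun j' hj' =>
      quad_eq_zero hJ4 hx ha hj' hb
    have := refl_pair href hdec h0 hjz
    rwa [← mul_assoc] at this
  -- q = b*a*c ≠ 0
  have hq : b * a * c ≠ 0 := by
    intro h0
    apply hs
    have hb0 : b * (a * c) = 0 := by rw [← mul_assoc]; exact h0
    have hjz : ∀ j' ∈ Jset R, b * j' * (a * c) = 0 := by
      intro j' hj'
      rw [← mul_assoc, Z1 j' hj', zero_mul]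
    exact refl_pair href hdec hb0 hjz
  -- torsion facts
  have hps : p • (a * c * b) = 0 := by
    rw [nsmul_eq_mul, ← mul_assoc, ← mul_assoc]
    exact quad_eq_zero hJ4 hpJ ha hc hb
  have hpq : p • (b * a * c) = 0 := by
    rw [nsmul_eq_mul, ← mul_assoc, ← mul_assoc]
    exact quad_eq_zero hJ4 hpJ hb ha hc
  -- span machinery
  obtain ⟨d, hd2, hrel⟩ := h2
  have hpK : ∀ x ∈ jacobsonPow R 2, p • x ∈ jacobsonPow R 3 := by
    intro x hx
    rw [nsmul_eq_mul]
    exact jpow_mul_mem_left hpJ hx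
  have hτK : b * a ∈ jacobsonPow R 2 := mem_jpow2 hb ha
  have hαK : a * c ∈ jacobsonPow R 2 := mem_jpow2 ha hc
  have hind : ∀ m n' : ℕ, m • (b * a) + n' • (a * c) ∈ jacobsonPow R 3 → p ∣ m ∧ p ∣ n' := by
    intro m n' hmem
    have h1 : (m • (b * a) + n' • (a * c)) * b = 0 := j3_mul_right hJ4 hmem hb
    rw [add_mul, smul_mul_assoc, smul_mul_assoc, mul_assoc b a b, hab, mul_zero, smul_zero,
      zero_add] at h1
    have hdn : p ∣ n' := psm hp hs hps h1
    obtain ⟨k, hk⟩ := hdn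
    have hn'mem : n' • (a * c) ∈ jacobsonPow R 3 := by
      rw [hk, mul_comm p k, mul_nsmul]
      exact hpK _ ((jacobsonPow R 2).nsmul_mem hαK k)
    have hmτ : m • (b * a) ∈ jacobsonPow R 3 := by
      have := (jacobsonPow R 3).sub_mem hmem hn'mem
      simpa using this
    have h2' : (m • (b * a)) * c = 0 := j3_mul_right hJ4 hmτ hc
    rw [smul_mul_assoc] at h2'
    exact ⟨psm hp hq hpq h2', ⟨k, hk⟩⟩
  have span := span_lemma hp hrel hd2 hpK hτK hαK hind
  -- zero products used below
  have za1 : a * (b * a) = 0 := by rw [← mul_assoc, hab, zero_mul]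
  have zb1 : b * (c * a) = 0 := by rw [← mul_assoc]; exact Z1 c hc
  have zb2 : b * (b * a) = 0 := by rw [← mul_assoc]; exact Z1 b hb
  -- first application : expand c*a
  obtain ⟨m, n', hz⟩ := span (c * a) (mem_jpow2 hc ha)
  have e1 : b * (c * a - m • (b * a) - n' • (a * c)) = 0 := j3_mul_left hJ4 hz hb
  rw [mul_sub, mul_sub, mul_smul_comm, mul_smul_comm, zb1, zb2, smul_zero] at e1
  have e1' : n' • (b * (a * c)) = 0 := by simpa using e1
  rw [← mul_assoc] at e1'
  have pn' : p ∣ n' := psm hp hq hpq e1'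
  obtain ⟨k, rfl⟩ := pn'
  have hpaac : p • (a * (a * c)) = 0 := by
    rw [nsmul_eq_mul, ← mul_assoc, ← mul_assoc]
    exact quad_eq_zero hJ4 hpJ ha ha hc
  have haac0 : (p * k) • (a * (a * c)) = 0 := by
    rw [mul_nsmul, hpaac, smul_zero]
  have e2 : a * (c * a - m • (b * a) - (p * k) • (a * c)) = 0 := j3_mul_left hJ4 hz ha
  rw [mul_sub, mul_sub, mul_smul_comm, mul_smul_comm, za1, smul_zero, haac0] at e2
  have e3 : a * c * a = 0 := by
    rw [mul_assoc]
    simpa using e2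
  have e4 : a * (a * c) = 0 :=
    refl_pair href hdec e3 (fun j' hj' => quad_eq_zero hJ4 ha hc hj' ha)
  -- second application : expand c*b
  obtain ⟨m2, n2, hz2⟩ := span (c * b) (mem_jpow2 hc hb)
  have e5 : a * (c * b - m2 • (b * a) - n2 • (a * c)) = 0 := j3_mul_left hJ4 hz2 ha
  rw [mul_sub, mul_sub, mul_smul_comm, mul_smul_comm, za1, smul_zero, e4, smul_zero] at e5
  apply hs
  rw [mul_assoc]
  simpa using e5
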